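/- Let B be a nonempty set, f₁, f₂, g : B → ω with f₁(b) ≤ f₂(b) for all b ∈ B. For i = 1, 2 define the partial function 𝒰ᵢ(m) = max{fᵢ(b) : b ∈ B, g(b) ≤ m}, defined exactly when {fᵢ(b) : g(b) ≤ m} is nonempty and bounded above. Then typ(𝒰₁) ⪯ typ(𝒰₂) with respect to the linear order α ≺ β ≺ γ ≺ δ ≺ ε. -/
import Mathlib


def domPlus (D : Set ℕ) (g : ℕ → ℕ) : Set ℕ := {n ∈ D | n ≤ g n}

def domMinus (D : Set ℕ) (g : ℕ → ℕ) : Set ℕ := {n ∈ D | g n ≤ n}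

def bddOn (D : Set ℕ) (g : ℕ → ℕ) : Prop := ∃ C, ∀ n ∈ D, g n ≤ C

inductive Typ where
  | A | B | C | D | E
deriving DecidableEq

def typIs (D : Set ℕ) (g : ℕ → ℕ) : Typ → Prop
  | .A => D.Infinite ∧ bddOn D g
  | .B => D.Infinite ∧ (domPlus D g).Finite ∧ ¬ bddOn D g
  | .C => (domPlus D g).Infinite ∧ (domMinus D g).Infinite
  | .D => D.Infinite ∧ (domMinus D g).Finite
  | .E => D.Finite

/-- Position in the linear order α ≺ β ≺ γ ≺ δ ≺ ε. -/
def Typ.ord : Typ → ℕ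
  | .A => 0
  | .B => 1
  | .C => 2
  | .D => 3
  | .E => 4

/-- If `f₁ ≤ f₂` pointwise, then for `𝒰ᵢ(m) = max {fᵢ b : g b ≤ m}` we have
`typ(𝒰₁) ⪯ typ(𝒰₂)`. -/
theorem stmt9 {B : Type*} [Nonempty B] (f₁ f₂ g : B → ℕ)
    (hle : ∀ b, f₁ b ≤ f₂ b)
    (dom₁ : Set ℕ) (val₁ : ℕ → ℕ) (dom₂ : Set ℕ) (val₂ : ℕ → ℕ)
    (hdom₁ : dom₁ = {m | (∃ b, g b ≤ m) ∧ BddAbove {k | ∃ b, g b ≤ m ∧ f₁ b = k}})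
    (hval₁ : ∀ m ∈ dom₁, val₁ m = sSup {k | ∃ b, g b ≤ m ∧ f₁ b = k})
    (hdom₂ : dom₂ = {m | (∃ b, g b ≤ m) ∧ BddAbove {k | ∃ b, g b ≤ m ∧ f₂ b = k}})
    (hval₂ : ∀ m ∈ dom₂, val₂ m = sSup {k | ∃ b, g b ≤ m ∧ f₂ b = k})
    (t₁ t₂ : Typ) (ht₁ : typIs dom₁ val₁ t₁) (ht₂ : typIs dom₂ val₂ t₂) :
    t₁.ord ≤ t₂.ord := by
  -- dom₂ ⊆ dom₁
  have hsub : dom₂ ⊆ dom₁ := by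
    rw [hdom₁, hdom₂]
    rintro m ⟨hb, C, hC⟩
    refine ⟨hb, C, ?_⟩
    rintro k ⟨b, hgb, rfl⟩
    exact le_trans (hle b) (hC ⟨b, hgb, rfl⟩)
  -- if dom₂ is infinite, dom₁ ⊆ dom₂
  have hsub' : dom₂.Infinite → dom₁ ⊆ dom₂ := by
    intro hinf m hm
    obtain ⟨m', hm', hmm'⟩ := hinf.exists_gt m
    rw [hdom₁] at hm
    rw [hdom₂] at hm' ⊢
    refine ⟨hm.1, ?_⟩
    obtain ⟨C, hC⟩ := hm'.2
    refine ⟨C, ?_⟩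
    rintro k ⟨b, hgb, rfl⟩
    exact hC ⟨b, hgb.trans hmm'.le, rfl⟩
  -- val₁ ≤ val₂ on dom₂
  have hvle : ∀ m ∈ dom₂, val₁ m ≤ val₂ m := by
    intro m hm
    have hm2 := hm
    rw [hdom₂] at hm2
    obtain ⟨⟨b₀, hb₀⟩, hbdd⟩ := hm2
    rw [hval₁ m (hsub hm), hval₂ m hm]
    refine csSup_le ⟨f₁ b₀, b₀, hb₀, rfl⟩ ?_
    rintro k ⟨b, hgb, rfl⟩
    exact (hle b).trans (le_csSup hbdd ⟨b, hgb, rfl⟩)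
  have hMinusSub : domMinus dom₂ val₂ ⊆ domMinus dom₁ val₁ := by
    rintro n ⟨hn, hv⟩
    exact ⟨hsub hn, (hvle n hn).trans hv⟩
  have hsplit : ∀ (D : Set ℕ) (v : ℕ → ℕ), D ⊆ domPlus D v ∪ domMinus D v := by
    intro D v n hn
    rcases le_total n (v n) with h | h
    · exact Or.inl ⟨hn, h⟩
    · exact Or.inr ⟨hn, h⟩
  -- dom₂ infinite in the relevant cases
  cases t₁ <;> cases t₂ <;> simp only [Typ.ord] <;> try omega
  all_goals exfalso
  -- remaining nontrivial cases
  case B.A =>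
    obtain ⟨hinf₁, hP₁, hunb₁⟩ := ht₁
    obtain ⟨hinf₂, C, hC⟩ := ht₂
    exact hunb₁ ⟨C, fun n hn => (hvle n (hsub' hinf₂ hn)).trans (hC n (hsub' hinf₂ hn))⟩
  case C.A =>
    obtain ⟨hP₁, hM₁⟩ := ht₁
    obtain ⟨hinf₂, C, hC⟩ := ht₂
    refine hP₁ ((Set.finite_Iic C).subset ?_)
    rintro n ⟨hn, hv⟩
    have hn2 := hsub' hinf₂ hn
    exact hv.trans ((hvle n hn2).trans (hC n hn2))
  case C.B =>
    obtain ⟨hP₁, hM₁⟩ := ht₁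
    obtain ⟨hinf₂, hP₂, hunb₂⟩ := ht₂
    refine hP₁ (hP₂.subset ?_)
    rintro n ⟨hn, hv⟩
    have hn2 := hsub' hinf₂ hn
    exact ⟨hn2, hv.trans (hvle n hn2)⟩
  case D.A =>
    obtain ⟨hinf₁, hM₁⟩ := ht₁
    obtain ⟨hinf₂, C, hC⟩ := ht₂
    have hinfm : (domMinus dom₂ val₂).Infinite := by
      refine Set.Infinite.mono ?_ (hinf₂.diff (Set.finite_Iic C))
      rintro n ⟨hn, hCn⟩
      simp only [Set.mem_Iic, not_le] at hCn
      exact ⟨hn, (hC n hn).trans hCn.le⟩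
    exact hinfm (hM₁.subset hMinusSub)
  case D.B =>
    obtain ⟨hinf₁, hM₁⟩ := ht₁
    obtain ⟨hinf₂, hP₂, hunb₂⟩ := ht₂
    exact hinf₂ (((hP₂.union (hM₁.subset hMinusSub)).subset (hsplit dom₂ val₂)))
  case D.C =>
    obtain ⟨hinf₁, hM₁⟩ := ht₁
    obtain ⟨hP₂, hM₂⟩ := ht₂
    exact hM₂ (hM₁.subset hMinusSub)
  case E.A =>
    exact ht₂.1 (ht₁.subset hsub)
  case E.B =>
    exact ht₂.1 (ht₁.subset hsub)
  case E.C =>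
    exact ht₂.1 ((ht₁.subset hsub).subset (fun n hn => hn.1))
  case E.D =>
    exact ht₂.1 (ht₁.subset hsub)
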